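/- Define f₅(p) = (p⁴ + 4p³ + 35p² + 62p + 94)/(2p⁵ + 10p⁴ + 80p³ + 200p² + 368p + 240). Then for every odd p ≥ 3, f₅(p-2) + f₅(p) - 1/p = 14400/(p¹¹ + 55p⁹ + 968p⁷ + 3520p⁵ + 9856p³ - 14400p). -/

import Mathlib

theorem madhava_sthaulya_fifth (p : ℤ) (hp : 3 ≤ p) (hodd : Odd p) :
    (((p : ℝ) - 2) ^ 4 + 4 * ((p : ℝ) - 2) ^ 3 + 35 * ((p : ℝ) - 2) ^ 2
        + 62 * ((p : ℝ) - 2) + 94)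
        / (2 * ((p : ℝ) - 2) ^ 5 + 10 * ((p : ℝ) - 2) ^ 4 + 80 * ((p : ℝ) - 2) ^ 3
            + 200 * ((p : ℝ) - 2) ^ 2 + 368 * ((p : ℝ) - 2) + 240)
      + ((p : ℝ) ^ 4 + 4 * (p : ℝ) ^ 3 + 35 * (p : ℝ) ^ 2 + 62 * (p : ℝ) + 94)
        / (2 * (p : ℝ) ^ 5 + 10 * (p : ℝ) ^ 4 + 80 * (p : ℝ) ^ 3 + 200 * (p : ℝ) ^ 2
            + 368 * (p : ℝ) + 240)
      - 1 / (p : ℝ)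
      = 14400 / ((p : ℝ) ^ 11 + 55 * (p : ℝ) ^ 9 + 968 * (p : ℝ) ^ 7 + 3520 * (p : ℝ) ^ 5
          + 9856 * (p : ℝ) ^ 3 - 14400 * (p : ℝ)) := by
  have hp' : (3 : ℝ) ≤ (p : ℝ) := by exact_mod_cast hp
  have h1 : 2 * ((p : ℝ) - 2) ^ 5 + 10 * ((p : ℝ) - 2) ^ 4 + 80 * ((p : ℝ) - 2) ^ 3
      + 200 * ((p : ℝ) - 2) ^ 2 + 368 * ((p : ℝ) - 2) + 240 ≠ 0 := by
    nlinarith [pow_le_pow_left₀ (by norm_num : (0:ℝ) ≤ 1) (by linarith : (1:ℝ) ≤ (p:ℝ) - 2) 5,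
      sq_nonneg ((p:ℝ) - 2), pow_pos (by linarith : (0:ℝ) < (p:ℝ) - 2) 3,
      pow_pos (by linarith : (0:ℝ) < (p:ℝ) - 2) 4, pow_pos (by linarith : (0:ℝ) < (p:ℝ) - 2) 5]
  have h2 : 2 * (p : ℝ) ^ 5 + 10 * (p : ℝ) ^ 4 + 80 * (p : ℝ) ^ 3 + 200 * (p : ℝ) ^ 2
      + 368 * (p : ℝ) + 240 ≠ 0 := by
    nlinarith [pow_pos (by linarith : (0:ℝ) < (p:ℝ)) 3, pow_pos (by linarith : (0:ℝ) < (p:ℝ)) 4,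
      pow_pos (by linarith : (0:ℝ) < (p:ℝ)) 5]
  have h3 : (p : ℝ) ^ 11 + 55 * (p : ℝ) ^ 9 + 968 * (p : ℝ) ^ 7 + 3520 * (p : ℝ) ^ 5
      + 9856 * (p : ℝ) ^ 3 - 14400 * (p : ℝ) ≠ 0 := by
    have h9 : (9:ℝ) ≤ (p:ℝ)^2 := by nlinarith
    have hp3 : (0:ℝ) < (p:ℝ)^3 := pow_pos (by linarith) 3
    nlinarith [pow_pos (by linarith : (0:ℝ) < (p:ℝ)) 5, pow_pos (by linarith : (0:ℝ) < (p:ℝ)) 7,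
      pow_pos (by linarith : (0:ℝ) < (p:ℝ)) 9, pow_pos (by linarith : (0:ℝ) < (p:ℝ)) 11,
      mul_nonneg (by linarith : (0:ℝ) ≤ (p:ℝ)) (by linarith : (0:ℝ) ≤ (p:ℝ)^2 - 9)]
  have hp0 : (p : ℝ) ≠ 0 := ne_of_gt (by linarith)
  rw [div_add_div _ _ h1 h2, div_sub_div _ _ (mul_ne_zero h1 h2) hp0,
    div_eq_div_iff (mul_ne_zero (mul_ne_zero h1 h2) hp0) h3]
  ring
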